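/- Let α = ξ > 0. There exists a solution (y, z) of the reduced problem ẏ = e^z − 1, ż = ξ + e^z(αz − ξy − ξ), defined on a maximal interval (−∞, t₊), such that y(t) → ∞ and z(t) + log(y(t))·(1 + 1/y(t)) → 0 as t → −∞, and y(t) → ∞ and z(t) − y(t) − (1+ξ)/ξ → 0 as t → t₊. (At α = ξ the manifolds W^{cu}(Q⁶) and W^{cs}(Q³) coincide, producing a connecting orbit with both asymptotics.) -/

import Mathlib

open Filter Topology

/-- `(y,z)` solves the reduced problem `ẏ = e^z − 1`, `ż = ξ + e^z(αz − ξy − ξ)`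
on the interval `(−∞, tp)`. -/
def IsSolUpTo (α ξ : ℝ) (y z : ℝ → ℝ) (tp : EReal) : Prop :=
  ∀ t : ℝ, (t : EReal) < tp →
    HasDerivAt y (Real.exp (z t) - 1) t ∧
    HasDerivAt z (ξ + Real.exp (z t) * (α * z t - ξ * y t - ξ)) t

/-- `tp` is the maximal forward time of existence. -/
def IsFwdMaximal (α ξ : ℝ) (y z : ℝ → ℝ) (tp : EReal) : Prop :=
  ∀ (tp' : EReal) (y' z' : ℝ → ℝ), tp ≤ tp' → IsSolUpTo α ξ y' z' tp' →
    (∀ t : ℝ, (t : EReal) < tp → y' t = y t ∧ z' t = z t) → tp' = tp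

/-- The filter of real times `t → tp⁻` (which is `atTop` when `tp = ∞`). -/
noncomputable def fwdFilter (tp : EReal) : Filter ℝ :=
  Filter.comap (fun t : ℝ => (t : EReal)) (nhdsWithin tp (Set.Iio tp))

/-- At `α = ξ` the manifolds `W^{cu}(Q⁶)` and `W^{cs}(Q³)` coincide: there is a
maximal solution on `(−∞, t₊)` with `y(t) → ∞`, `z(t) + log(y(t))(1 + 1/y(t)) → 0`
as `t → −∞`, and `y(t) → ∞`, `z(t) − y(t) − (1+ξ)/ξ → 0` as `t → t₊`. -/
lemma fwdFilter_zero : fwdFilter (0 : EReal) = 𝓝[<] (0:ℝ) := by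
  unfold fwdFilter
  rw [nhdsWithin, nhdsWithin, comap_inf, comap_principal]
  congr 1
  · have h0 : (0 : EReal) = ((0:ℝ) : EReal) := rfl
    rw [h0, ← EReal.isEmbedding_coe.nhds_eq_comap]
  · congr 1
    ext t
    simp [EReal.coe_lt_coe_iff]

lemma log_div_small : Filter.Tendsto (fun s : ℝ => Real.log s / s) atTop (𝓝 0) :=
  Real.isLittleO_log_id_atTop.tendsto_div_nhds_zero


theorem stmt_8 (ξ : ℝ) (hξ : 0 < ξ) :
    ∃ (tp : EReal) (y z : ℝ → ℝ),
      IsSolUpTo ξ ξ y z tp ∧ IsFwdMaximal ξ ξ y z tp ∧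
      Tendsto y atBot atTop ∧
      Tendsto (fun t => z t + Real.log (y t) * (1 + 1 / y t)) atBot (𝓝 0) ∧
      Tendsto y (fwdFilter tp) atTop ∧
      Tendsto (fun t => z t - y t - (1 + ξ) / ξ) (fwdFilter tp) (𝓝 0) := by
  set c : ℝ := (1 + ξ) / ξ with hc
  set y : ℝ → ℝ := fun t => -t - Real.log (-t) - c with hy
  set z : ℝ → ℝ := fun t => -Real.log (-t) with hz
  have hξ0 : ξ ≠ 0 := ne_of_gt hξ
  -- the solution property
  have hsol : IsSolUpTo ξ ξ y z (0 : EReal) := by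
    intro t htE
    have ht : t < 0 := by exact_mod_cast htE
    have ht0 : -t ≠ 0 := by linarith [neg_pos.mpr ht]
    have htne : t ≠ 0 := ne_of_lt ht
    have hexp : Real.exp (z t) = (-t)⁻¹ := by
      rw [hz]
      simp only
      rw [Real.exp_neg, Real.exp_log (by linarith : (0:ℝ) < -t)]
    have h1 : HasDerivAt (fun t : ℝ => -t) (-1) t := (hasDerivAt_id t).neg
    have h2 : HasDerivAt (fun t : ℝ => Real.log (-t)) (-1 / -t) t := h1.log ht0
    constructor
    · have h3 : HasDerivAt y (-1 - -1 / -t) t := (h1.sub h2).sub_const c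
      convert h3 using 1
      rw [hexp]
      field_simp
      ring
    · have h3 : HasDerivAt z (-(-1 / -t)) t := h2.neg
      convert h3 using 1
      rw [hexp, hy, hz, hc]
      simp only
      field_simp
      ring
  -- forward limit of y at 0⁻
  have hlogneg : Tendsto (fun t : ℝ => Real.log (-t)) (𝓝[<] (0:ℝ)) atBot := by
    apply Real.tendsto_log_nhdsGT_zero.comp
    rw [tendsto_nhdsWithin_iff]
    constructor
    · exact (continuous_neg.tendsto' 0 0 (by simp)).mono_left nhdsWithin_le_nhds
    · filter_upwards [self_mem_nhdsWithin] with t ht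
      exact Set.mem_Ioi.mpr (by simpa using neg_pos.mpr (Set.mem_Iio.mp ht))
  have hyfwd : Tendsto y (𝓝[<] (0:ℝ)) atTop := by
    have h1 : Tendsto (fun t : ℝ => -Real.log (-t)) (𝓝[<] (0:ℝ)) atTop :=
      tendsto_neg_atBot_atTop.comp hlogneg
    have h2 : ∀ᶠ t : ℝ in 𝓝[<] (0:ℝ), (-1 - c : ℝ) ≤ -t - c := by
      filter_upwards [self_mem_nhdsWithin] with t ht
      have := Set.mem_Iio.mp ht
      linarith
    have h3 := tendsto_atTop_add_left_of_le' (𝓝[<] (0:ℝ)) (-1 - c) h2 h1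
    refine h3.congr (fun t => ?_)
    simp only [hy]
    ring
  -- backward limit of y
  have hlog2 : ∀ᶠ s : ℝ in atTop, Real.log s < s / 2 := by
    have h := log_div_small.eventually_lt_const (by norm_num : (0:ℝ) < 1/2)
    filter_upwards [h, eventually_gt_atTop (0:ℝ)] with s hs hs0
    calc Real.log s = Real.log s / s * s := by field_simp
    _ < 1/2 * s := by exact mul_lt_mul_of_pos_right hs hs0
    _ = s / 2 := by ring
  have hneg : Tendsto (fun t : ℝ => -t) atBot atTop := tendsto_neg_atBot_atTop
  have hybot : Tendsto y atBot atTop := by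
    apply tendsto_atTop_mono' atBot
      (f₁ := fun t : ℝ => -t / 2 - c)
    · filter_upwards [hneg.eventually hlog2] with t ht
      simp only [hy]
      linarith
    · apply tendsto_atTop_add_const_right
      exact (tendsto_neg_atBot_atTop).atTop_div_const (by norm_num)
  -- backward asymptotics
  have hbackward : Tendsto (fun t => z t + Real.log (y t) * (1 + 1 / y t)) atBot (𝓝 0) := by
    have hB : Tendsto (fun t => Real.log (y t) / y t) atBot (𝓝 0) :=
      log_div_small.comp hybot
    have hratio : Tendsto (fun t => y t / (-t)) atBot (𝓝 1) := by
      have e1 : Tendsto (fun t : ℝ => Real.log (-t) / (-t)) atBot (𝓝 0) :=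
        log_div_small.comp hneg
      have e2 : Tendsto (fun t : ℝ => c / (-t)) atBot (𝓝 0) :=
        tendsto_const_nhds.div_atTop hneg
      have e3 : Tendsto (fun t : ℝ => 1 - Real.log (-t) / (-t) - c / (-t)) atBot (𝓝 1) := by
        have := (tendsto_const_nhds (x := (1:ℝ)) (f := atBot)).sub e1 |>.sub e2
        simpa using this
      refine e3.congr' ?_
      filter_upwards [eventually_lt_atBot (0:ℝ)] with t ht
      have ht0 : -t ≠ 0 := by linarith [neg_pos.mpr ht]
      simp only [hy]
      rw [sub_div, sub_div, div_self ht0]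
    have hA : Tendsto (fun t => z t + Real.log (y t)) atBot (𝓝 0) := by
      have hlog1 : Tendsto (fun t => Real.log (y t / (-t))) atBot (𝓝 0) := by
        have := (Real.continuousAt_log one_ne_zero).tendsto.comp hratio
        simpa [Function.comp_def] using this
      refine hlog1.congr' ?_
      filter_upwards [hybot.eventually (eventually_gt_atTop (0:ℝ)),
        eventually_lt_atBot (0:ℝ)] with t hyt ht
      rw [Real.log_div (ne_of_gt hyt) (by linarith [neg_pos.mpr ht])]
      simp only [hz]
      ring
    have := hA.add hB
    rw [add_zero] at this
    refine this.congr (fun t => ?_)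
    rw [mul_add, mul_one, mul_one_div]
    ring
  refine ⟨(0 : EReal), y, z, hsol, ?_, hybot, hbackward, ?_, ?_⟩
  · -- maximality
    intro tp' y' z' hle hsol' hagree
    by_contra hne
    have hpos : (0 : EReal) < tp' := lt_of_le_of_ne hle (Ne.symm hne)
    have h0 : ((0:ℝ) : EReal) < tp' := by exact_mod_cast hpos
    have hcont : ContinuousAt y' 0 := ((hsol' 0 h0).1).continuousAt
    have htend : Tendsto y' (𝓝[<] (0:ℝ)) (𝓝 (y' 0)) :=
      hcont.continuousWithinAt.tendsto
    have heq : y' =ᶠ[𝓝[<] (0:ℝ)] y := by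
      filter_upwards [self_mem_nhdsWithin] with t ht
      exact (hagree t (by exact_mod_cast ht)).1
    have : Tendsto y' (𝓝[<] (0:ℝ)) atTop := hyfwd.congr' heq.symm
    exact not_tendsto_nhds_of_tendsto_atTop this (y' 0) htend
  · rw [fwdFilter_zero]; exact hyfwd
  · rw [fwdFilter_zero]
    have : (fun t => z t - y t - (1 + ξ) / ξ) = fun t : ℝ => t := by
      funext t; simp only [hy, hz, hc]; ring
    rw [this]
    exact tendsto_id.mono_right nhdsWithin_le_nhds
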